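/- Let X be a d-way tensor of size n₁×⋯×n_d and let P_j ∈ ℝ^{n_j×n_j}, j = 1,…,d, be orthogonal projectors (P_j² = P_j = P_jᵀ). Then ‖X − X ×₁ P₁ ×₂ ⋯ ×_d P_d‖² = ∑_{j=1}^d ‖X ×₁ P₁ ⋯ ×_{j−1} P_{j−1} ×_j (I − P_j)‖² ≤ ∑_{j=1}^d ‖X − X ×_j P_j‖². -/
import Mathlib


open Matrix

/-- The squared tensor (Frobenius) norm of a `d`-way tensor. -/
noncomputable def tnorm2 {d : ℕ} {n : Fin d → ℕ} (X : ((j : Fin d) → Fin (n j)) → ℝ) : ℝ :=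
  ∑ i : (j : Fin d) → Fin (n j), X i ^ 2

/-- The mode-`j` tensor-times-matrix product with a square matrix acting on mode `j`. -/
noncomputable def ttm {d : ℕ} {n : Fin d → ℕ} (X : ((j : Fin d) → Fin (n j)) → ℝ)
    (j : Fin d) (A : Matrix (Fin (n j)) (Fin (n j)) ℝ) : ((j : Fin d) → Fin (n j)) → ℝ :=
  fun i => ∑ k, A (i j) k * X (Function.update i j k)

/-- `ttmUpTo X P m` is `X ×₁ P₁ ×₂ ⋯ ×ₘ Pₘ`, i.e. `X` multiplied in modes `0, …, m-1`
(and all modes when `m = d`). -/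
noncomputable def ttmUpTo {d : ℕ} {n : Fin d → ℕ} (X : ((j : Fin d) → Fin (n j)) → ℝ)
    (P : (j : Fin d) → Matrix (Fin (n j)) (Fin (n j)) ℝ) : ℕ → ((j : Fin d) → Fin (n j)) → ℝ
  | 0 => X
  | m + 1 => if h : m < d then ttm (ttmUpTo X P m) ⟨m, h⟩ (P ⟨m, h⟩) else ttmUpTo X P m

section Aux
variable {d : ℕ} {n : Fin d → ℕ}

noncomputable def tinner (X Y : ((j : Fin d) → Fin (n j)) → ℝ) : ℝ :=
  ∑ i, X i * Y i

lemma tnorm2_eq_tinner (X : ((j : Fin d) → Fin (n j)) → ℝ) : tnorm2 X = tinner X X := by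
  simp [tnorm2, tinner, sq]

lemma tinner_comm (X Y : ((j : Fin d) → Fin (n j)) → ℝ) : tinner X Y = tinner Y X := by
  simp [tinner, mul_comm]

lemma tnorm2_nonneg (X : ((j : Fin d) → Fin (n j)) → ℝ) : 0 ≤ tnorm2 X :=
  Finset.sum_nonneg fun i _ => sq_nonneg _

lemma ttm_one (X : ((j : Fin d) → Fin (n j)) → ℝ) (j : Fin d) :
    ttm X j (1 : Matrix (Fin (n j)) (Fin (n j)) ℝ) = X := by
  funext i
  simp [ttm, Matrix.one_apply]

lemma ttm_zero (X : ((j : Fin d) → Fin (n j)) → ℝ) (j : Fin d) :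
    ttm X j (0 : Matrix (Fin (n j)) (Fin (n j)) ℝ) = 0 := by
  funext _; simp [ttm]

lemma ttm_matrix_sub (X : ((j : Fin d) → Fin (n j)) → ℝ) (j : Fin d)
    (A B : Matrix (Fin (n j)) (Fin (n j)) ℝ) :
    ttm X j (A - B) = ttm X j A - ttm X j B := by
  funext i
  simp [ttm, sub_mul, Finset.sum_sub_distrib]

lemma ttm_ttm_same (X : ((j : Fin d) → Fin (n j)) → ℝ) (j : Fin d)
    (A B : Matrix (Fin (n j)) (Fin (n j)) ℝ) :
    ttm (ttm X j A) j B = ttm X j (B * A) := by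
  funext i
  simp only [ttm, Matrix.mul_apply, Finset.mul_sum, Finset.sum_mul,
    Function.update_self, Function.update_idem]
  rw [Finset.sum_comm]
  apply Finset.sum_congr rfl; intro l _
  apply Finset.sum_congr rfl; intro k _
  ring

lemma ttm_comm (X : ((j : Fin d) → Fin (n j)) → ℝ) {j k : Fin d} (hjk : j ≠ k)
    (A : Matrix (Fin (n j)) (Fin (n j)) ℝ) (B : Matrix (Fin (n k)) (Fin (n k)) ℝ) :
    ttm (ttm X j A) k B = ttm (ttm X k B) j A := by
  funext i
  simp only [ttm, Finset.mul_sum]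
  rw [Finset.sum_comm]
  apply Finset.sum_congr rfl; intro a _
  apply Finset.sum_congr rfl; intro b _
  rw [Function.update_of_ne hjk, Function.update_of_ne hjk.symm,
    Function.update_comm hjk]
  ring

lemma tinner_ttm_left (X Y : ((j : Fin d) → Fin (n j)) → ℝ) (j : Fin d)
    (A : Matrix (Fin (n j)) (Fin (n j)) ℝ) :
    tinner (ttm X j A) Y = tinner X (ttm Y j Aᵀ) := by
  have hinv : Function.Involutive
      (fun p : ((j' : Fin d) → Fin (n j')) × Fin (n j) =>
        ((Function.update p.1 j p.2, p.1 j) : ((j' : Fin d) → Fin (n j')) × Fin (n j))) := by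
    intro p
    simp [Function.update_idem]
  simp only [tinner, ttm, Finset.sum_mul, Finset.mul_sum]
  rw [← Fintype.sum_prod_type', ← Fintype.sum_prod_type']
  rw [← Equiv.sum_comp (hinv.toPerm _) (fun p : ((j' : Fin d) → Fin (n j')) × Fin (n j) =>
      X p.1 * (Aᵀ (p.1 j) p.2 * Y (Function.update p.1 j p.2)))]
  apply Finset.sum_congr rfl
  intro p _
  simp only [Function.Involutive.coe_toPerm, Matrix.transpose_apply,
    Function.update_self, Function.update_idem, Function.update_eq_self]
  ring

lemma tinner_sum_sum {ι : Type*} [Fintype ι] (f g : ι → ((j : Fin d) → Fin (n j)) → ℝ) :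
    tinner (∑ a, f a) (∑ b, g b) = ∑ a, ∑ b, tinner (f a) (g b) := by
  simp only [tinner, Finset.sum_apply, Finset.sum_mul_sum]
  rw [Finset.sum_comm]
  apply Finset.sum_congr rfl; intro a _
  rw [Finset.sum_comm]

lemma tnorm2_sum_of_ortho {ι : Type*} [Fintype ι] (f : ι → ((j : Fin d) → Fin (n j)) → ℝ)
    (h : ∀ a b, a ≠ b → tinner (f a) (f b) = 0) :
    tnorm2 (∑ a, f a) = ∑ a, tnorm2 (f a) := by
  rw [tnorm2_eq_tinner, tinner_sum_sum]
  apply Finset.sum_congr rfl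
  intro a _
  rw [tnorm2_eq_tinner]
  rw [Finset.sum_eq_single a (fun b _ hb => h a b (Ne.symm hb)) (by simp)]

lemma tnorm2_add (X Y : ((j : Fin d) → Fin (n j)) → ℝ) :
    tnorm2 (X + Y) = tnorm2 X + 2 * tinner X Y + tnorm2 Y := by
  simp only [tnorm2, tinner, Pi.add_apply, ← Finset.sum_add_distrib, Finset.mul_sum]
  apply Finset.sum_congr rfl; intro i _; ring

lemma ttm_add_left (X Y : ((j : Fin d) → Fin (n j)) → ℝ) (j : Fin d)
    (A : Matrix (Fin (n j)) (Fin (n j)) ℝ) :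
    ttm (X + Y) j A = ttm X j A + ttm Y j A := by
  funext i
  simp [ttm, mul_add, Finset.sum_add_distrib]

end Aux

section Main
variable {d : ℕ} {n : Fin d → ℕ}
variable (X : ((j : Fin d) → Fin (n j)) → ℝ)
variable (P : (j : Fin d) → Matrix (Fin (n j)) (Fin (n j)) ℝ)

lemma ttmUpTo_succ_fin (j : Fin d) :
    ttmUpTo X P (j.1 + 1) = ttm (ttmUpTo X P j.1) j (P j) := by
  have h := j.isLt
  simp [ttmUpTo, h]

lemma step_eq (j : Fin d) :
    ttm (ttmUpTo X P j.1) j ((1 : Matrix (Fin (n j)) (Fin (n j)) ℝ) - P j)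
      = ttmUpTo X P j.1 - ttmUpTo X P (j.1 + 1) := by
  rw [ttm_matrix_sub, ttm_one, ttmUpTo_succ_fin]

lemma telescope :
    X - ttmUpTo X P d
      = ∑ j : Fin d, ttm (ttmUpTo X P j.1) j ((1 : Matrix (Fin (n j)) (Fin (n j)) ℝ) - P j) := by
  have h1 : ∀ j : Fin d, ttm (ttmUpTo X P j.1) j ((1 : Matrix (Fin (n j)) (Fin (n j)) ℝ) - P j)
      = (fun m => ttmUpTo X P m - ttmUpTo X P (m+1)) j.1 := fun j => step_eq X P j
  rw [Finset.sum_congr rfl (fun j _ => h1 j),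
    Fin.sum_univ_eq_sum_range (fun m => ttmUpTo X P m - ttmUpTo X P (m+1)) d,
    Finset.sum_range_sub' (fun m => ttmUpTo X P m)]
  rfl

lemma exists_factor (j : Fin d) :
    ∀ m, j.1 < m → m ≤ d → ∃ C, ttmUpTo X P m = ttm C j (P j) := by
  intro m
  induction m with
  | zero => omega
  | succ m ih =>
    intro hj hm
    have hmd : m < d := hm
    rcases Nat.lt_or_ge j.1 m with h | h
    · obtain ⟨C, hC⟩ := ih h (le_of_lt hm)
      have hne : j ≠ (⟨m, hmd⟩ : Fin d) := by
        simp only [ne_eq, Fin.ext_iff]; omega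
      refine ⟨ttm C ⟨m, hmd⟩ (P ⟨m, hmd⟩), ?_⟩
      show (if h : m < d then ttm (ttmUpTo X P m) ⟨m, h⟩ (P ⟨m, h⟩) else ttmUpTo X P m) = _
      rw [dif_pos hmd, hC, ttm_comm C hne]
    · have hjm : j = (⟨m, hmd⟩ : Fin d) := by
        apply Fin.ext; simp; omega
      refine ⟨ttmUpTo X P m, ?_⟩
      show (if h : m < d then ttm (ttmUpTo X P m) ⟨m, h⟩ (P ⟨m, h⟩) else ttmUpTo X P m) = _
      rw [dif_pos hmd, ← hjm]

lemma ttm_ttmUpTo_comm (j : Fin d) (Q : Matrix (Fin (n j)) (Fin (n j)) ℝ) :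
    ∀ m, m ≤ j.1 → ttm (ttmUpTo X P m) j Q = ttmUpTo (ttm X j Q) P m := by
  intro m
  induction m with
  | zero => intro _; rfl
  | succ m ih =>
    intro h
    have hmd : m < d := lt_of_lt_of_le (by omega) j.isLt.le
    have hne : (⟨m, hmd⟩ : Fin d) ≠ j := by
      simp only [ne_eq, Fin.ext_iff]; omega
    show ttm (if h : m < d then ttm (ttmUpTo X P m) ⟨m, h⟩ (P ⟨m, h⟩) else ttmUpTo X P m) j Q
      = (if h : m < d then ttm (ttmUpTo (ttm X j Q) P m) ⟨m, h⟩ (P ⟨m, h⟩)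
          else ttmUpTo (ttm X j Q) P m)
    rw [dif_pos hmd, dif_pos hmd, ttm_comm _ hne, ih (by omega)]

lemma tnorm2_ttm_proj_le (W : ((j : Fin d) → Fin (n j)) → ℝ) (k : Fin d)
    (Q : Matrix (Fin (n k)) (Fin (n k)) ℝ) (h1 : Q * Q = Q) (h2 : Qᵀ = Q) :
    tnorm2 (ttm W k Q) ≤ tnorm2 W := by
  have hdecomp : W = ttm W k Q + ttm W k (1 - Q) := by
    rw [ttm_matrix_sub, ttm_one]; ring
  have hc : tinner (ttm W k Q) (ttm W k (1 - Q)) = 0 := by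
    rw [tinner_ttm_left, ttm_ttm_same, h2]
    have : Q * (1 - Q) = 0 := by rw [mul_sub, mul_one, h1, sub_self]
    rw [this, ttm_zero]
    simp [tinner]
  calc tnorm2 (ttm W k Q) ≤ tnorm2 (ttm W k Q) + tnorm2 (ttm W k (1 - Q)) :=
        le_add_of_nonneg_right (tnorm2_nonneg _)
    _ = tnorm2 W := by
        conv_rhs => rw [hdecomp]
        rw [tnorm2_add, hc]; ring

lemma tnorm2_ttmUpTo_le (hproj : ∀ j, P j * P j = P j ∧ (P j)ᵀ = P j) :
    ∀ m, tnorm2 (ttmUpTo X P m) ≤ tnorm2 X := by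
  intro m
  induction m with
  | zero => exact le_refl _
  | succ m ih =>
    show tnorm2 (if h : m < d then ttm (ttmUpTo X P m) ⟨m, h⟩ (P ⟨m, h⟩) else ttmUpTo X P m) ≤ _
    split
    · exact le_trans (tnorm2_ttm_proj_le _ _ _ (hproj _).1 (hproj _).2) ih
    · exact ih

end Main

/-- For orthogonal projectors `P₁, …, P_d`,
`‖X − X ×₁ P₁ ⋯ ×_d P_d‖² = ∑ⱼ ‖X ×₁ P₁ ⋯ ×_{j−1} P_{j−1} ×ⱼ (I − Pⱼ)‖²
  ≤ ∑ⱼ ‖X − X ×ⱼ Pⱼ‖²`. -/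
theorem tnorm2_multi_proj_decomp {d : ℕ} {n : Fin d → ℕ}
    (X : ((j : Fin d) → Fin (n j)) → ℝ)
    (P : (j : Fin d) → Matrix (Fin (n j)) (Fin (n j)) ℝ)
    (hproj : ∀ j, P j * P j = P j ∧ (P j)ᵀ = P j) :
    tnorm2 (X - ttmUpTo X P d)
      = ∑ j : Fin d, tnorm2 (ttm (ttmUpTo X P j.1) j ((1 : Matrix (Fin (n j)) (Fin (n j)) ℝ) - P j))
    ∧ ∑ j : Fin d, tnorm2 (ttm (ttmUpTo X P j.1) j ((1 : Matrix (Fin (n j)) (Fin (n j)) ℝ) - P j))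
      ≤ ∑ j : Fin d, tnorm2 (X - ttm X j (P j)) := by
  set f : Fin d → ((j : Fin d) → Fin (n j)) → ℝ :=
    fun j => ttm (ttmUpTo X P j.1) j ((1 : Matrix (Fin (n j)) (Fin (n j)) ℝ) - P j) with hf
  have hQt : ∀ j : Fin d, ((1 : Matrix (Fin (n j)) (Fin (n j)) ℝ) - P j)ᵀ = 1 - P j := by
    intro j
    rw [Matrix.transpose_sub, Matrix.transpose_one, (hproj j).2]
  have hortho_lt : ∀ j k : Fin d, j.1 < k.1 → tinner (f j) (f k) = 0 := by
    intro j k hlt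
    obtain ⟨C, hC⟩ := exists_factor X P j k.1 hlt k.isLt.le
    have hne : j ≠ k := by simp only [ne_eq, Fin.ext_iff]; omega
    have hfk : f k = ttm (ttm C k ((1 : Matrix (Fin (n k)) (Fin (n k)) ℝ) - P k)) j (P j) := by
      rw [hf]; dsimp only
      rw [hC, ttm_comm C hne]
    rw [hfk, hf]; dsimp only
    rw [tinner_ttm_left, ttm_ttm_same, hQt j]
    have : ((1 : Matrix (Fin (n j)) (Fin (n j)) ℝ) - P j) * P j = 0 := by
      rw [sub_mul, one_mul, (hproj j).1, sub_self]
    rw [this, ttm_zero]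
    simp [tinner]
  have hortho : ∀ j k : Fin d, j ≠ k → tinner (f j) (f k) = 0 := by
    intro j k hjk
    rcases Nat.lt_or_ge j.1 k.1 with h | h
    · exact hortho_lt j k h
    · have : k.1 < j.1 := by
        rcases Nat.lt_or_ge k.1 j.1 with h' | h'
        · exact h'
        · exact absurd (Fin.ext (le_antisymm h h')) hjk.symm
      rw [tinner_comm]
      exact hortho_lt k j this
  constructor
  · rw [telescope X P, tnorm2_sum_of_ortho f hortho]
  · apply Finset.sum_le_sum
    intro j _
    have h1 : X - ttm X j (P j) = ttm X j ((1 : Matrix (Fin (n j)) (Fin (n j)) ℝ) - P j) := by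
      rw [ttm_matrix_sub, ttm_one]
    rw [h1]
    rw [ttm_ttmUpTo_comm X P j _ j.1 le_rfl]
    exact tnorm2_ttmUpTo_le _ P hproj j.1
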